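/- The heights h(q_1),…,h(q_n) are pairwise distinct modulo n, and ∑_{j=1}^n h(q_j) = Nn + n(n−1)/2. -/

import Mathlib

open Polynomial Matrix

/-- The height of an `n`-dimensional vector polynomial. -/
noncomputable def vheight (n : ℕ) (r : Fin n → Polynomial ℂ) : WithBot ℕ :=
  Finset.univ.sup fun j : Fin n => n • (r j).degree + ((j : ℕ) : WithBot ℕ)

/-- The class `𝓜(n,N)` of band symmetric matrices with degeneration indices `m`. -/
structure MatrixClassM (n N : ℕ) (A : Matrix (Fin N) (Fin N) ℝ) (m : ℕ → ℕ) : Prop where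
  symm : A.IsSymm
  band : ∀ k l : Fin N, (n : ℤ) < |(k : ℤ) - (l : ℤ)| → A k l = 0
  m_zero : m 0 = 0
  m_last : m n = N
  m_mono : ∀ j < n, m j < m (j + 1)
  m_one : 1 < m 1
  m_le : ∀ j, 1 ≤ j → j ≤ n → m j ≤ N - n + j
  d_pos : ∀ j < n, ∀ k l : Fin N, (l : ℕ) = (k : ℕ) + (n - j) →
      m j < (k : ℕ) + 1 → (k : ℕ) + 1 < m (j + 1) → 0 < A l k
  d_zero : ∀ j < n, ∀ k l : Fin N, (l : ℕ) = (k : ℕ) + (n - j) →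
      m (j + 1) ≤ (k : ℕ) + 1 → (k : ℕ) + 1 ≤ N - n + j → A l k = 0

/-- The rank-one jump matrix `σ_k`. -/
def sigmaJump {n N : ℕ} (αc : Fin N → Fin n → ℂ) (k : Fin N) :
    Matrix (Fin n) (Fin n) ℂ :=
  Matrix.of fun i j => (starRingEnd ℂ) (αc k i) * αc k j

/-- The inner product `⟨r,s⟩_{L²(σ)}` for vector polynomials. -/
noncomputable def L2inner {n N : ℕ} (x : Fin N → ℝ)
    (σ : Fin N → Matrix (Fin n) (Fin n) ℂ) (r s : Fin n → Polynomial ℂ) : ℂ :=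
  ∑ k, ∑ i, ∑ j,
    (starRingEnd ℂ) ((r i).eval ((x k : ℂ))) * σ k i j * (s j).eval ((x k : ℂ))

/-- The interpolation set `𝕊`. -/
def interpSet {n N : ℕ} (z : Fin N → ℂ) (α : Fin N → Fin n → ℂ) :
    Set (Fin n → Polynomial ℂ) :=
  {r | ∀ k, ∑ j, α k j * (r j).eval (z k) = 0}

/-- `𝕄(r_1) + ⋯ + 𝕄(r_m)`. -/
def polySpan {n m : ℕ} (r : Fin m → Fin n → Polynomial ℂ) :
    Set (Fin n → Polynomial ℂ) :=
  {s | ∃ c : Fin m → Polynomial ℂ, s = fun jj => ∑ i, c i * r i jj}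

/-- `𝕄(r_1) + ⋯ + 𝕄(r_{j-1})`. -/
def prevSpan {n : ℕ} (r : Fin n → Fin n → Polynomial ℂ) (j : Fin n) :
    Set (Fin n → Polynomial ℂ) :=
  {s | ∃ c : Fin n → Polynomial ℂ,
      s = fun jj => ∑ i ∈ Finset.univ.filter (fun i => i < j), c i * r i jj}

/-- `r` is a sequence of generators of `S`. -/
def IsGenSeq {n : ℕ} (S : Set (Fin n → Polynomial ℂ))
    (r : Fin n → Fin n → Polynomial ℂ) : Prop :=
  ∀ j : Fin n, r j ≠ 0 ∧ r j ∈ S \ prevSpan r j ∧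
    ∀ s ∈ S \ prevSpan r j, s ≠ 0 → vheight n (r j) ≤ vheight n s


namespace Stmt15Aux



/-- segment of the predecessor of `t` -/
def sj (n : ℕ) (m : ℕ → ℕ) (t : ℕ) : ℕ :=
  Nat.findGreatest (fun j => m j + (n - j) < t) (n - 1)

/-- predecessor of a position `t > n` -/
def pr (n : ℕ) (m : ℕ → ℕ) (t : ℕ) : ℕ := t - max 1 (n - sj n m t)

lemma pr_lt (n : ℕ) (m : ℕ → ℕ) {t : ℕ} (ht : 1 ≤ t) : pr n m t < t := by
  have : max 1 (n - sj n m t) ≥ 1 := le_max_left _ _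
  unfold pr; omega

/-- chain length -/
def len (n : ℕ) (m : ℕ → ℕ) (t : ℕ) : ℕ :=
  if _h : t ≤ n then 0 else len n m (pr n m t) + 1
  termination_by t
  decreasing_by exact pr_lt n m (by omega)

/-- chain start -/
def st (n : ℕ) (m : ℕ → ℕ) (t : ℕ) : ℕ :=
  if _h : t ≤ n then t else st n m (pr n m t)
  termination_by t
  decreasing_by exact pr_lt n m (by omega)

/-- the height potential -/
def om (n : ℕ) (m : ℕ → ℕ) (t : ℕ) : ℕ := st n m t - 1 + n * len n m t

lemma len_le (n : ℕ) (m : ℕ → ℕ) {t : ℕ} (h : t ≤ n) : len n m t = 0 := by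
  rw [len]; simp [h]

lemma len_gt (n : ℕ) (m : ℕ → ℕ) {t : ℕ} (h : ¬ t ≤ n) :
    len n m t = len n m (pr n m t) + 1 := by
  rw [len]; simp [h]

lemma st_le (n : ℕ) (m : ℕ → ℕ) {t : ℕ} (h : t ≤ n) : st n m t = t := by
  rw [st]; simp [h]

lemma st_gt (n : ℕ) (m : ℕ → ℕ) {t : ℕ} (h : ¬ t ≤ n) :
    st n m t = st n m (pr n m t) := by
  rw [st]; simp [h]

lemma sj_le (n : ℕ) (m : ℕ → ℕ) (t : ℕ) : sj n m t ≤ n - 1 :=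
  Nat.findGreatest_le _

lemma pr_eq (n : ℕ) (m : ℕ → ℕ) {t : ℕ} (hn : 0 < n) :
    pr n m t = t - (n - sj n m t) := by
  have h1 : sj n m t ≤ n - 1 := sj_le n m t
  have : max 1 (n - sj n m t) = n - sj n m t := by omega
  rw [pr, this]

lemma m_mono_le {n : ℕ} {m : ℕ → ℕ} (hmono : ∀ j < n, m j < m (j + 1)) :
    ∀ a b, a ≤ b → b ≤ n → m a + (b - a) ≤ m b := by
  intro a b hab hbn
  induction b with
  | zero => have : a = 0 := by omega
            subst this; omega
  | succ b ih =>
    rcases Nat.eq_or_lt_of_le hab with rfl | h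
    · omega
    · have := hmono b (by omega)
      have := ih (by omega) (by omega)
      omega

lemma m_ge {n : ℕ} {m : ℕ → ℕ} (hmono : ∀ j < n, m j < m (j + 1)) (hm1 : 1 < m 1) :
    ∀ j, 1 ≤ j → j ≤ n → j + 1 ≤ m j := by
  intro j h1 h2
  have := m_mono_le hmono 1 j h1 h2
  omega

/-- K1 : structure of the predecessor, for `n < t ≤ N`. -/
lemma pred_struct {n N : ℕ} {m : ℕ → ℕ} (hn : 0 < n) (hmN : m n = N)
    (hmono : ∀ j < n, m j < m (j + 1)) (hm0 : m 0 = 0)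
    {t : ℕ} (h1 : n < t) (h2 : t ≤ N) :
    sj n m t < n ∧ m (sj n m t) < pr n m t ∧ pr n m t < m (sj n m t + 1) ∧
      pr n m t + (n - sj n m t) = t := by
  have hjle : sj n m t ≤ n - 1 := sj_le n m t
  have hspec : m (sj n m t) + (n - sj n m t) < t := by
    have h0 : m 0 + (n - 0) < t := by omega
    exact Nat.findGreatest_spec (P := fun j => m j + (n - j) < t) (m := 0)
      (Nat.zero_le _) h0
  have hpr : pr n m t = t - (n - sj n m t) := pr_eq n m hn
  have hlt : m (sj n m t) < pr n m t := by omega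
  have hup : pr n m t < m (sj n m t + 1) := by
    rcases Nat.lt_or_ge (sj n m t) (n - 1) with hlt' | hge
    · have hng : ¬ (m (sj n m t + 1) + (n - (sj n m t + 1)) < t) :=
        Nat.findGreatest_is_greatest (P := fun j => m j + (n - j) < t)
          (Nat.lt_succ_self _) (by omega)
      omega
    · have hj' : sj n m t = n - 1 := by omega
      have : m (sj n m t + 1) = N := by rw [hj', show n - 1 + 1 = n by omega, hmN]
      omega
  exact ⟨by omega, hlt, hup, by omega⟩

/-- K2 : pr ∘ succ = id on rows. -/
lemma succ_pred {n N : ℕ} {m : ℕ → ℕ} (hn : 0 < n) (hmN : m n = N)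
    (hmono : ∀ j < n, m j < m (j + 1)) (hm1 : 1 < m 1)
    (hmle : ∀ j, 1 ≤ j → j ≤ n → m j ≤ N - n + j) (hnN : n < N)
    {r j : ℕ} (hjn : j < n) (hlo : m j < r) (hhi : r < m (j + 1)) :
    sj n m (r + (n - j)) = j ∧ pr n m (r + (n - j)) = r ∧ n < r + (n - j) ∧
      r + (n - j) ≤ N := by
  have hr1 : 1 ≤ r := by omega
  have hgt : n < r + (n - j) := by
    rcases Nat.eq_zero_or_pos j with rfl | hj
    · omega
    · have := m_ge hmono hm1 j hj (by omega); omega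
  have hle : r + (n - j) ≤ N := by
    have := hmle (j+1) (by omega) (by omega)
    omega
  have hsj : sj n m (r + (n - j)) = j := by
    rw [sj, Nat.findGreatest_eq_iff]
    refine ⟨by omega, fun _ => by omega, ?_⟩
    intro k hk1 hk2
    have hmk : m (j+1) + (k - (j+1)) ≤ m k := m_mono_le hmono (j+1) k (by omega) (by omega)
    omega
  refine ⟨hsj, ?_, hgt, hle⟩
  rw [pr_eq n m hn, hsj]
  omega

lemma sj_mono (n : ℕ) (m : ℕ → ℕ) {a b : ℕ} (h : a ≤ b) : sj n m a ≤ sj n m b := by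
  unfold sj
  exact Nat.findGreatest_mono_left (fun k hk => by omega) _

lemma pr_strict_mono {n : ℕ} {m : ℕ → ℕ} (hn : 0 < n) {a b : ℕ}
    (hn1 : n < a) (h : a < b) : pr n m a < pr n m b := by
  have h1 := sj_mono n m (le_of_lt h)
  have h2 := sj_le n m a
  have h3 := sj_le n m b
  rw [pr_eq n m hn, pr_eq n m hn]
  omega

lemma pr_ge_one {n : ℕ} {m : ℕ → ℕ} (hn : 0 < n) {t : ℕ} (ht : n < t) :
    1 ≤ pr n m t := by
  have := sj_le n m t
  rw [pr_eq n m hn]; omega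

/-- strict monotonicity of om -/
lemma om_strict_mono {n : ℕ} {m : ℕ → ℕ} (hn : 0 < n) :
    ∀ b a, 1 ≤ a → a < b → om n m a < om n m b := by
  intro b
  induction b using Nat.strong_induction_on with
  | _ b ih =>
    intro a ha hab
    rcases le_or_gt b n with hb | hb
    · rw [om, om, len_le n m (by omega), len_le n m (by omega),
        st_le n m (by omega), st_le n m (by omega)]
      omega
    · have hb' : om n m b = om n m (pr n m b) + n := by
        rw [om, om, len_gt n m (by omega), st_gt n m (by omega)]; ring
      rcases le_or_gt a n with halen | halen
      · have : om n m a = a - 1 := by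
          rw [om, len_le n m halen, st_le n m halen]; omega
        have h1 : 1 ≤ pr n m b := pr_ge_one hn hb
        have h2 : pr n m b < b := pr_lt n m (by omega)
        have : 0 ≤ om n m (pr n m b) := Nat.zero_le _
        omega
      · have ha' : om n m a = om n m (pr n m a) + n := by
          rw [om, om, len_gt n m (by omega), st_gt n m (by omega)]; ring
        have hpp : pr n m a < pr n m b := pr_strict_mono hn halen hab
        have hpa : 1 ≤ pr n m a := pr_ge_one hn halen
        have hprb : pr n m b < b := pr_lt n m (by omega)
        have := ih (pr n m b) (by omega) (pr n m a) hpa hpp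
        omega

lemma om_mono {n : ℕ} {m : ℕ → ℕ} (hn : 0 < n) {a b : ℕ} (ha : 1 ≤ a) (h : a ≤ b) :
    om n m a ≤ om n m b := by
  rcases Nat.eq_or_lt_of_le h with rfl | h
  · exact le_refl _
  · exact le_of_lt (om_strict_mono hn b a ha h)

lemma om_le_self (n : ℕ) (m : ℕ → ℕ) {t : ℕ} (h : t ≤ n) : om n m t = t - 1 := by
  rw [om, len_le n m h, st_le n m h]; omega

lemma om_succ {n N : ℕ} {m : ℕ → ℕ} (hn : 0 < n) (hmN : m n = N)
    (hmono : ∀ j < n, m j < m (j + 1)) (hm1 : 1 < m 1)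
    (hmle : ∀ j, 1 ≤ j → j ≤ n → m j ≤ N - n + j) (hnN : n < N)
    {r j : ℕ} (hjn : j < n) (hlo : m j < r) (hhi : r < m (j + 1)) :
    om n m (r + (n - j)) = om n m r + n ∧ st n m (r + (n - j)) = st n m r ∧
      len n m (r + (n - j)) = len n m r + 1 := by
  obtain ⟨hsj, hpr, hgt, _⟩ := succ_pred hn hmN hmono hm1 hmle hnN hjn hlo hhi
  refine ⟨?_, ?_, ?_⟩
  · rw [om, om, len_gt n m (by omega), st_gt n m (by omega), hpr]; ring
  · rw [st_gt n m (by omega), hpr]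
  · rw [len_gt n m (by omega), hpr]

lemma st_range {n : ℕ} {m : ℕ → ℕ} (hn : 0 < n) :
    ∀ t, 1 ≤ t → 1 ≤ st n m t ∧ st n m t ≤ n := by
  intro t
  induction t using Nat.strong_induction_on with
  | _ t ih =>
    intro ht
    rcases le_or_gt t n with h | h
    · rw [st_le n m h]; omega
    · rw [st_gt n m (by omega)]
      exact ih (pr n m t) (pr_lt n m (by omega)) (pr_ge_one hn h)


lemma om_gt {n : ℕ} (m : ℕ → ℕ) {t : ℕ} (h : ¬ t ≤ n) :
    om n m t = om n m (pr n m t) + n := by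
  rw [om, om, len_gt n m h, st_gt n m h]; ring

lemma len_pos_gt {n : ℕ} (m : ℕ → ℕ) {t : ℕ} (h : 1 ≤ len n m t) : n < t := by
  by_contra hc
  rw [len_le n m (by omega)] at h
  omega

lemma seg_uniq {n : ℕ} {m : ℕ → ℕ} (hmono : ∀ j < n, m j < m (j + 1))
    {r j1 j2 : ℕ} (h1 : j1 < n) (h2 : j2 < n)
    (a1 : m j1 < r) (b1 : r < m (j1 + 1)) (a2 : m j2 < r) (b2 : r < m (j2 + 1)) :
    j1 = j2 := by
  rcases Nat.lt_trichotomy j1 j2 with h | h | h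
  · have := m_mono_le hmono (j1+1) j2 (by omega) (by omega); omega
  · exact h
  · have := m_mono_le hmono (j2+1) j1 (by omega) (by omega); omega

/-- chain points: the iterated predecessors of a point. -/
lemma chain_pts {n N : ℕ} {m : ℕ → ℕ} (hn : 0 < n) (hmN : m n = N)
    (hmono : ∀ j < n, m j < m (j + 1)) (hm0 : m 0 = 0) (hnN : n < N) :
    ∀ d t, 1 ≤ t → t ≤ N → d ≤ len n m t →
      1 ≤ (pr n m)^[d] t ∧ (pr n m)^[d] t ≤ N ∧
        len n m ((pr n m)^[d] t) = len n m t - d ∧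
        st n m ((pr n m)^[d] t) = st n m t := by
  intro d
  induction d with
  | zero => intro t h1 h2 _; simpa using ⟨h1, h2⟩
  | succ d ih =>
    intro t h1 h2 hd
    obtain ⟨w1, w2, wlen, wst⟩ := ih t h1 h2 (by omega)
    have hwgt : n < (pr n m)^[d] t := len_pos_gt m (by omega)
    obtain ⟨hsj, hlo, hhi, _⟩ := pred_struct hn hmN hmono hm0 hwgt w2
    have hple : pr n m ((pr n m)^[d] t) ≤ N := by
      have : m (sj n m ((pr n m)^[d] t) + 1) ≤ m n :=
        le_trans (by omega) (m_mono_le hmono (sj n m ((pr n m)^[d] t) + 1) n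
          (by omega) (le_refl n))
      omega
    have hit : (pr n m)^[d+1] t = pr n m ((pr n m)^[d] t) :=
      Function.iterate_succ_apply' _ _ _
    have hlw : len n m ((pr n m)^[d] t) = len n m (pr n m ((pr n m)^[d] t)) + 1 :=
      len_gt n m (by omega)
    have hsw : st n m ((pr n m)^[d] t) = st n m (pr n m ((pr n m)^[d] t)) :=
      st_gt n m (by omega)
    rw [hit]
    exact ⟨by omega, hple, by omega, by omega⟩

lemma chain_uniq {n N : ℕ} {m : ℕ → ℕ} (hn : 0 < n) (hmN : m n = N)
    (hmono : ∀ j < n, m j < m (j + 1)) (hm0 : m 0 = 0) (hnN : n < N) :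
    ∀ k t1 t2, 1 ≤ t1 → t1 ≤ N → 1 ≤ t2 → t2 ≤ N →
      len n m t1 = k → len n m t2 = k → st n m t1 = st n m t2 → t1 = t2 := by
  intro k
  induction k with
  | zero =>
    intro t1 t2 a1 a2 b1 b2 l1 l2 hst
    have h1 : t1 ≤ n := by
      by_contra hc; rw [len_gt n m hc] at l1; omega
    have h2 : t2 ≤ n := by
      by_contra hc; rw [len_gt n m hc] at l2; omega
    rwa [st_le n m h1, st_le n m h2] at hst
  | succ k ih =>
    intro t1 t2 a1 a2 b1 b2 l1 l2 hst
    have h1 : ¬ t1 ≤ n := by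
      by_contra hc; rw [len_le n m hc] at l1; omega
    have h2 : ¬ t2 ≤ n := by
      by_contra hc; rw [len_le n m hc] at l2; omega
    obtain ⟨s1, p1, q1, e1⟩ := pred_struct hn hmN hmono hm0 (by omega : n < t1) a2
    obtain ⟨s2, p2, q2, e2⟩ := pred_struct hn hmN hmono hm0 (by omega : n < t2) b2
    have hr1 : pr n m t1 ≤ N := by
      have := m_mono_le hmono (sj n m t1 + 1) n (by omega) (le_refl n); omega
    have hr2 : pr n m t2 ≤ N := by
      have := m_mono_le hmono (sj n m t2 + 1) n (by omega) (le_refl n); omega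
    rw [len_gt n m h1] at l1
    rw [len_gt n m h2] at l2
    rw [st_gt n m h1, st_gt n m h2] at hst
    have heq : pr n m t1 = pr n m t2 :=
      ih (pr n m t1) (pr n m t2) (by omega) hr1 (by omega) hr2
        (by omega) (by omega) hst
    have : sj n m t1 = sj n m t2 := by
      apply seg_uniq hmono s1 s2 p1 q1 (heq ▸ p2) (heq ▸ q2)
    omega

lemma chain_mem {n N : ℕ} {m : ℕ → ℕ} (hn : 0 < n) (hmN : m n = N)
    (hmono : ∀ j < n, m j < m (j + 1)) (hm0 : m 0 = 0) (hnN : n < N) :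
    ∀ d t a, 1 ≤ t → t ≤ N → 1 ≤ a → a ≤ N → st n m a = st n m t →
      len n m a + d = len n m t → (pr n m)^[d] t = a := by
  intro d
  induction d with
  | zero =>
    intro t a h1 h2 h3 h4 hst hlen
    simp only [Function.iterate_zero_apply]
    exact (chain_uniq hn hmN hmono hm0 hnN (len n m t) a t h3 h4 h1 h2
      (by omega) rfl hst).symm
  | succ d ih =>
    intro t a h1 h2 h3 h4 hst hlen
    have htn : ¬ t ≤ n := by
      by_contra hc; rw [len_le n m hc] at hlen; omega
    obtain ⟨s1, p1, q1, e1⟩ := pred_struct hn hmN hmono hm0 (by omega : n < t) h2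
    have hr : pr n m t ≤ N := by
      have := m_mono_le hmono (sj n m t + 1) n (by omega) (le_refl n); omega
    rw [Function.iterate_succ_apply]
    apply ih (pr n m t) a (by omega) hr h3 h4
    · rw [← st_gt n m htn]; exact hst
    · rw [len_gt n m htn] at hlen; omega

lemma pred_not_m {n N : ℕ} {m : ℕ → ℕ} (hn : 0 < n) (hmN : m n = N)
    (hmono : ∀ j < n, m j < m (j + 1)) (hm0 : m 0 = 0)
    {t : ℕ} (h1 : n < t) (h2 : t ≤ N) :
    ∀ i, 1 ≤ i → i ≤ n → pr n m t ≠ m i := by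
  intro i hi1 hi2 hc
  obtain ⟨s1, p1, q1, e1⟩ := pred_struct hn hmN hmono hm0 h1 h2
  rcases le_or_gt i (sj n m t) with h | h
  · have := m_mono_le hmono i (sj n m t) h (by omega); omega
  · have := m_mono_le hmono (sj n m t + 1) i h hi2; omega

/-- K5 : the starts of the chains ending at the `m i` are pairwise distinct. -/
lemma st_m_inj {n N : ℕ} {m : ℕ → ℕ} (hn : 0 < n) (hmN : m n = N)
    (hmono : ∀ j < n, m j < m (j + 1)) (hm0 : m 0 = 0) (hnN : n < N) (hm1 : 1 < m 1)
    {i i' : ℕ} (hi1 : 1 ≤ i) (hi2 : i ≤ n) (hj1 : 1 ≤ i') (hj2 : i' ≤ n)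
    (hst : st n m (m i) = st n m (m i')) : i = i' := by
  have key : ∀ a b, 1 ≤ a → a ≤ n → 1 ≤ b → b ≤ n →
      st n m (m a) = st n m (m b) → len n m (m a) < len n m (m b) → False := by
    intro a b ha1 ha2 hb1 hb2 hstab hlt
    have hma1 : 1 ≤ m a := by have := m_ge hmono hm1 a ha1 ha2; omega
    have hma2 : m a ≤ N := by have := m_mono_le hmono a n ha2 (le_refl n); omega
    have hmb1 : 1 ≤ m b := by have := m_ge hmono hm1 b hb1 hb2; omega
    have hmb2 : m b ≤ N := by have := m_mono_le hmono b n hb2 (le_refl n); omega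
    set d := len n m (m b) - len n m (m a) with hd
    have hd1 : 1 ≤ d := by omega
    obtain ⟨w1, w2, wlen, wst⟩ := chain_pts hn hmN hmono hm0 hnN (d-1) (m b)
      hmb1 hmb2 (by omega)
    set w := (pr n m)^[d-1] (m b) with hw
    have hwlen : len n m w = len n m (m a) + 1 := by omega
    have hwgt : n < w := len_pos_gt m (by omega)
    have hprw : pr n m w = m a := by
      have h1 : (pr n m)^[d] (m b) = m a :=
        chain_mem hn hmN hmono hm0 hnN d (m b) (m a) hmb1 hmb2 hma1 hma2
          hstab (by omega)
      have h2 : (pr n m)^[d-1+1] (m b) = pr n m w := by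
        rw [hw]; exact Function.iterate_succ_apply' _ _ _
      rw [show d - 1 + 1 = d by omega] at h2
      rw [← h2, h1]
    exact pred_not_m hn hmN hmono hm0 hwgt w2 a ha1 ha2 hprw
  rcases Nat.lt_trichotomy (len n m (m i)) (len n m (m i')) with h | h | h
  · exact absurd (key i i' hi1 hi2 hj1 hj2 hst h) (fun x => x)
  · have hma1 : 1 ≤ m i := by have := m_ge hmono hm1 i hi1 hi2; omega
    have hma2 : m i ≤ N := by have := m_mono_le hmono i n hi2 (le_refl n); omega
    have hmb1 : 1 ≤ m i' := by have := m_ge hmono (by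
      have := m_mono_le hmono 0 1 (by omega) (by omega); omega) i' hj1 hj2; omega
    have hmb2 : m i' ≤ N := by have := m_mono_le hmono i' n hj2 (le_refl n); omega
    have := chain_uniq hn hmN hmono hm0 hnN (len n m (m i)) (m i) (m i')
      hma1 hma2 hmb1 hmb2 rfl h.symm hst
    by_contra hc
    rcases Nat.lt_or_ge i i' with hx | hx
    · have := m_mono_le hmono i i' (by omega) hj2; omega
    · have := m_mono_le hmono i' i (by omega) hi2; omega
  · exact absurd (key i' i hj1 hj2 hi1 hi2 hst.symm h) (fun x => x)


/-- U4 : every position lies on the chain of some `m i`. -/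
lemma chain_surj {n N : ℕ} {m : ℕ → ℕ} (hn : 0 < n) (hmN : m n = N)
    (hmono : ∀ j < n, m j < m (j + 1)) (hm0 : m 0 = 0) (hnN : n < N)
    (hm1 : 1 < m 1) (hmle : ∀ j, 1 ≤ j → j ≤ n → m j ≤ N - n + j) :
    ∀ d t, N - t ≤ d → 1 ≤ t → t ≤ N →
      ∃ i, 1 ≤ i ∧ i ≤ n ∧ st n m (m i) = st n m t ∧ len n m t ≤ len n m (m i) ∧
        (pr n m)^[len n m (m i) - len n m t] (m i) = t := by
  intro d
  induction d with
  | zero =>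
    intro t hd h1 h2
    have ht : t = N := by omega
    subst ht
    exact ⟨n, hn, le_refl n, by rw [hmN], by rw [hmN], by rw [hmN]; simp⟩
  | succ d ih =>
    intro t hd h1 h2
    by_cases hmem : ∃ i, 1 ≤ i ∧ i ≤ n ∧ m i = t
    · obtain ⟨i, hi1, hi2, hi3⟩ := hmem
      exact ⟨i, hi1, hi2, by rw [hi3], by rw [hi3], by rw [hi3]; simp⟩
    · -- t is a row of some segment
      have hP0 : m 0 < t := by omega
      have hjle : Nat.findGreatest (fun j => m j < t) (n - 1) ≤ n - 1 :=
        Nat.findGreatest_le _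
      have hjP : m (Nat.findGreatest (fun j => m j < t) (n - 1)) < t :=
        Nat.findGreatest_spec (P := fun j => m j < t) (m := 0) (Nat.zero_le _) hP0
      set j := Nat.findGreatest (fun j => m j < t) (n - 1) with hj
      have hjQ : t < m (j + 1) := by
        have hle : t ≤ m (j + 1) := by
          rcases Nat.lt_or_ge j (n - 1) with hlt' | hge
          · have := Nat.findGreatest_is_greatest (P := fun j => m j < t)
              (n := n - 1) (k := j + 1) (by omega) (by omega)
            simp only [not_lt] at this
            exact this
          · have hj' : j = n - 1 := by omega
            rw [hj', show n - 1 + 1 = n by omega, hmN]; exact h2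
        rcases Nat.eq_or_lt_of_le hle with heq | hlt
        · exact absurd ⟨j + 1, by omega, by omega, heq.symm⟩ hmem
        · exact hlt
      obtain ⟨hsj, hpr, hgtn, hleN⟩ := succ_pred hn hmN hmono hm1 hmle hnN
        (by omega : j < n) hjP hjQ
      obtain ⟨ho, hs, hl⟩ := om_succ hn hmN hmono hm1 hmle hnN
        (by omega : j < n) hjP hjQ
      have hnj : 1 ≤ n - j := by omega
      obtain ⟨i, hi1, hi2, hi3, hi4, hi5⟩ := ih (t + (n - j)) (by omega)
        (by omega) hleN
      refine ⟨i, hi1, hi2, by rw [hi3, hs], by omega, ?_⟩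
      have hk : len n m (m i) - len n m t = (len n m (m i) - len n m (t + (n - j))) + 1 := by
        omega
      rw [hk]
      have : (pr n m)^[(len n m (m i) - len n m (t + (n - j))) + 1] (m i)
          = pr n m ((pr n m)^[len n m (m i) - len n m (t + (n - j))] (m i)) :=
        Function.iterate_succ_apply' _ _ _
      rw [this, hi5, hpr]

/-- the lengths of the chains sum to `N`. -/
lemma len_sum {n N : ℕ} {m : ℕ → ℕ} (hn : 0 < n) (hmN : m n = N)
    (hmono : ∀ j < n, m j < m (j + 1)) (hm0 : m 0 = 0) (hnN : n < N)
    (hm1 : 1 < m 1) (hmle : ∀ j, 1 ≤ j → j ≤ n → m j ≤ N - n + j) :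
    ∑ i ∈ Finset.range n, (len n m (m (i+1)) + 1) = N := by
  classical
  have hmi1 : ∀ i, 1 ≤ i → i ≤ n → 1 ≤ m i := fun i a b => by
    have := m_ge hmono hm1 i a b; omega
  have hmi2 : ∀ i, i ≤ n → m i ≤ N := fun i b => by
    have := m_mono_le hmono i n b (le_refl n); omega
  have key : ((Finset.range n).sigma
      (fun i => Finset.range (len n m (m (i+1)) + 1))).card
      = (Finset.Icc 1 N).card := by
    apply Finset.card_bij (fun p _ => (pr n m)^[p.2] (m (p.1 + 1)))
    · rintro ⟨i, d⟩ hp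
      simp only [Finset.mem_sigma, Finset.mem_range] at hp
      obtain ⟨c1, c2, _, _⟩ := chain_pts hn hmN hmono hm0 hnN d (m (i+1))
        (hmi1 _ (by omega) (by omega)) (hmi2 _ (by omega)) (by omega)
      simp only [Finset.mem_Icc]
      exact ⟨c1, c2⟩
    · rintro ⟨i, d⟩ hp ⟨i', d'⟩ hp' heq
      simp only [Finset.mem_sigma, Finset.mem_range] at hp hp'
      change (pr n m)^[d] (m (i+1)) = (pr n m)^[d'] (m (i'+1)) at heq
      obtain ⟨c1, c2, c3, c4⟩ := chain_pts hn hmN hmono hm0 hnN d (m (i+1))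
        (hmi1 _ (by omega) (by omega)) (hmi2 _ (by omega)) (by omega)
      obtain ⟨c1', c2', c3', c4'⟩ := chain_pts hn hmN hmono hm0 hnN d' (m (i'+1))
        (hmi1 _ (by omega) (by omega)) (hmi2 _ (by omega)) (by omega)
      rw [heq] at c3 c4
      have hii : i + 1 = i' + 1 := st_m_inj hn hmN hmono hm0 hnN hm1
        (by omega) (by omega) (by omega) (by omega) (by rw [← c4, ← c4'])
      have : i = i' := by omega
      subst this
      have : d = d' := by omega
      subst this
      rfl
    · intro t ht
      simp only [Finset.mem_Icc] at ht
      obtain ⟨i, hi1, hi2, hi3, hi4, hi5⟩ := chain_surj hn hmN hmono hm0 hnN hm1 hmle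
        N t (by omega) ht.1 ht.2
      refine ⟨⟨i - 1, len n m (m i) - len n m t⟩, ?_, ?_⟩
      · simp only [Finset.mem_sigma, Finset.mem_range]
        constructor
        · omega
        · rw [show i - 1 + 1 = i by omega]; omega
      · simp only []
        rw [show i - 1 + 1 = i by omega]
        exact hi5
  rw [Finset.card_sigma] at key
  simp only [Finset.card_range] at key
  rwa [Nat.card_Icc, show N + 1 - 1 = N by omega] at key

/-- the starts sum. -/
lemma st_sum {n N : ℕ} {m : ℕ → ℕ} (hn : 0 < n) (hmN : m n = N)
    (hmono : ∀ j < n, m j < m (j + 1)) (hm0 : m 0 = 0) (hnN : n < N)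
    (hm1 : 1 < m 1) :
    ∑ i ∈ Finset.range n, (st n m (m (i+1)) - 1) = ∑ i ∈ Finset.range n, i := by
  classical
  have hmi1 : ∀ i, 1 ≤ i → i ≤ n → 1 ≤ m i := fun i a b => by
    have := m_ge hmono hm1 i a b; omega
  set g : ℕ → ℕ := fun i => st n m (m (i+1)) - 1 with hg
  have hrange : ∀ i ∈ Finset.range n, g i ∈ Finset.range n := by
    intro i hi
    simp only [Finset.mem_range] at hi ⊢
    have := st_range (m := m) hn (m (i+1)) (hmi1 _ (by omega) (by omega))
    simp only [hg]
    omega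
  have hinj : Set.InjOn g (Finset.range n) := by
    intro a ha b hb hab
    simp only [Finset.mem_coe, Finset.mem_range] at ha hb
    have h1 := st_range (m := m) hn (m (a+1)) (hmi1 _ (by omega) (by omega))
    have h2 := st_range (m := m) hn (m (b+1)) (hmi1 _ (by omega) (by omega))
    have : st n m (m (a+1)) = st n m (m (b+1)) := by
      simp only [hg] at hab; omega
    have := st_m_inj hn hmN hmono hm0 hnN hm1
      (by omega : 1 ≤ a+1) (by omega) (by omega : 1 ≤ b+1) (by omega) this
    omega
  have himg : (Finset.range n).image g = Finset.range n := by
    apply Finset.eq_of_subset_of_card_le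
    · intro x hx
      simp only [Finset.mem_image] at hx
      obtain ⟨a, ha, rfl⟩ := hx
      exact hrange a ha
    · rw [Finset.card_image_of_injOn hinj]
  calc ∑ i ∈ Finset.range n, g i
      = ∑ x ∈ (Finset.range n).image g, x := by
        rw [Finset.sum_image (fun a ha b hb h => hinj ha hb h)]
    _ = ∑ i ∈ Finset.range n, i := by rw [himg]

/-- K6 : the sum of the potentials at the degeneration indices. -/
lemma om_sum {n N : ℕ} {m : ℕ → ℕ} (hn : 0 < n) (hmN : m n = N)
    (hmono : ∀ j < n, m j < m (j + 1)) (hm0 : m 0 = 0) (hnN : n < N)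
    (hm1 : 1 < m 1) (hmle : ∀ j, 1 ≤ j → j ≤ n → m j ≤ N - n + j) :
    ∑ i ∈ Finset.range n, (om n m (m (i+1)) + n) = N * n + n * (n-1) / 2 := by
  have h1 := len_sum hn hmN hmono hm0 hnN hm1 hmle
  have h2 := st_sum hn hmN hmono hm0 hnN hm1
  have hsplit : ∀ i ∈ Finset.range n, om n m (m (i+1)) + n
      = (st n m (m (i+1)) - 1) + n * (len n m (m (i+1)) + 1) := by
    intro i hi
    rw [om]; ring
  rw [Finset.sum_congr rfl hsplit, Finset.sum_add_distrib, ← Finset.mul_sum, h1, h2,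
    Finset.sum_range_id]
  ring

/-- the bound used for the rows `m i` (the Mi lemma). -/
lemma om_mi {n N : ℕ} {m : ℕ → ℕ} (hn : 0 < n) (hmN : m n = N)
    (hmono : ∀ j < n, m j < m (j + 1)) (hm0 : m 0 = 0) (hnN : n < N)
    (hm1 : 1 < m 1) (hmle : ∀ j, 1 ≤ j → j ≤ n → m j ≤ N - n + j)
    {i : ℕ} (hi1 : 1 ≤ i) (hi2 : i ≤ n) :
    om n m (m i + (n - i)) + 1 ≤ om n m (m i) + n := by
  rcases Nat.eq_or_lt_of_le hi2 with rfl | hlt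
  · simp only [Nat.sub_self, Nat.add_zero]; omega
  · have hgei : i + 1 ≤ m i := m_ge hmono hm1 i hi1 hi2
    have htgt : n < m i + (n - i) := by omega
    have htle : m i + (n - i) ≤ N := by
      have := hmle i hi1 hi2; omega
    obtain ⟨hsj, hlo, hhi, heq⟩ := pred_struct hn hmN hmono hm0 htgt htle
    have hjlt : sj n m (m i + (n - i)) < i := by
      by_contra hc
      push_neg at hc
      have h1 : m i + (sj n m (m i + (n - i)) - i) ≤ m (sj n m (m i + (n - i))) :=
        m_mono_le hmono i _ hc (by omega)
      omega
    have hrlt : pr n m (m i + (n - i)) < m i := by omega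
    have hr1 : 1 ≤ pr n m (m i + (n - i)) := by omega
    have hmono' : om n m (pr n m (m i + (n - i))) < om n m (m i) :=
      om_strict_mono hn (m i) _ hr1 hrlt
    have : om n m (m i + (n - i)) = om n m (pr n m (m i + (n - i))) + n :=
      om_gt m (by omega)
    omega



open Polynomial

lemma wb_smul_bot {n : ℕ} (hn : 0 < n) : n • (⊥ : WithBot ℕ) = ⊥ := by
  obtain ⟨k, rfl⟩ := Nat.exists_eq_succ_of_ne_zero (by omega : n ≠ 0)
  rw [succ_nsmul]
  exact WithBot.add_bot _

lemma wb_smul_coe (n a : ℕ) : n • ((a : ℕ) : WithBot ℕ) = ((n * a : ℕ) : WithBot ℕ) := by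
  induction n with
  | zero => simp
  | succ k ih =>
    rw [succ_nsmul, ih]
    rw [Nat.cast_withBot, Nat.cast_withBot, Nat.cast_withBot, ← WithBot.coe_add]
    congr 1
    ring

lemma wb_smul_mono {n : ℕ} {d d' : WithBot ℕ} (h : d ≤ d') : n • d ≤ n • d' := by
  induction n with
  | zero => simp
  | succ k ih =>
    rw [succ_nsmul, succ_nsmul]
    exact add_le_add ih h

/-- main helper : bound `n • d + c ≤ e` for `d` the degree of a polynomial. -/
lemma wb_le_iff {n c e : ℕ} (hn : 0 < n) (d : WithBot ℕ) :
    n • d + (c : WithBot ℕ) ≤ (e : WithBot ℕ) ↔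
      (∀ a : ℕ, d = (a : WithBot ℕ) → n * a + c ≤ e) := by
  cases d with
  | bot =>
    constructor
    · intro _ a ha
      exact absurd ha.symm (by simp [Nat.cast_withBot])
    · intro _
      rw [wb_smul_bot hn, WithBot.bot_add]
      exact bot_le
  | coe a =>
    rw [show (WithBot.some a) = ((a : ℕ) : WithBot ℕ) by simp [Nat.cast_withBot],
      wb_smul_coe]
    rw [show ((n*a : ℕ) : WithBot ℕ) + (c : WithBot ℕ) = ((n*a+c : ℕ) : WithBot ℕ) by
      simp [Nat.cast_withBot, ← WithBot.coe_add]]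
    constructor
    · intro h a' ha'
      have : a = a' := by
        rw [Nat.cast_withBot, Nat.cast_withBot] at ha'
        exact WithBot.coe_inj.mp ha'
      subst this
      exact_mod_cast h
    · intro h
      exact_mod_cast h a (by simp [Nat.cast_withBot])




/-- sup bound helper -/
lemma wb_sup_bound {ι : Type*} {n : ℕ} (hn : 0 < n) (s : Finset ι)
    (g : ι → WithBot ℕ) (c e : ℕ)
    (h : ∀ i ∈ s, n • g i + (c : WithBot ℕ) ≤ (e : WithBot ℕ)) :
    n • s.sup g + (c : WithBot ℕ) ≤ (e : WithBot ℕ) := by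
  induction s using Finset.cons_induction with
  | empty =>
    simp only [Finset.sup_empty]
    rw [wb_smul_bot hn, WithBot.bot_add]
    exact bot_le
  | cons a s ha ih =>
    rw [Finset.sup_cons]
    have hmax : g a ⊔ s.sup g = max (g a) (s.sup g) := rfl
    rw [hmax]
    have hmono : Monotone (fun d : WithBot ℕ => n • d + (c : WithBot ℕ)) :=
      fun x y hxy => add_le_add_left (wb_smul_mono hxy) _
    have := hmono.map_max (a := g a) (b := s.sup g)
    rw [this]
    refine max_le (h a (Finset.mem_cons_self _ _)) (ih ?_)
    exact fun i hi => h i (Finset.mem_cons_of_mem hi)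

/-- degree bound transport along `≤` -/
lemma wb_deg_le {n : ℕ} (hn : 0 < n) {p q : Polynomial ℂ} (hpq : p.degree ≤ q.degree)
    {c e : ℕ} (h : n • q.degree + (c : WithBot ℕ) ≤ (e : WithBot ℕ)) :
    n • p.degree + (c : WithBot ℕ) ≤ (e : WithBot ℕ) :=
  le_trans (add_le_add_left (wb_smul_mono hpq) _) h

/-- bound for a sum of polynomials -/
lemma wb_deg_sum {ι : Type*} {n : ℕ} (hn : 0 < n) (s : Finset ι)
    (f : ι → Polynomial ℂ) (c e : ℕ)
    (h : ∀ i ∈ s, n • (f i).degree + (c : WithBot ℕ) ≤ (e : WithBot ℕ)) :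
    n • (∑ i ∈ s, f i).degree + (c : WithBot ℕ) ≤ (e : WithBot ℕ) := by
  have h1 : (∑ i ∈ s, f i).degree ≤ s.sup (fun i => (f i).degree) :=
    degree_sum_le _ _
  exact le_trans (add_le_add_left (wb_smul_mono h1) _) (wb_sup_bound hn s _ c e h)

/-- bound for `X * p` -/
lemma wb_deg_X_mul {n : ℕ} (hn : 0 < n) (p : Polynomial ℂ) {c e : ℕ}
    (h : n • p.degree + (c : WithBot ℕ) ≤ (e : WithBot ℕ)) :
    n • (X * p).degree + (c : WithBot ℕ) ≤ ((e + n : ℕ) : WithBot ℕ) := by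
  rw [wb_le_iff hn] at h ⊢
  intro a ha
  have hle : (X * p).degree ≤ 1 + p.degree :=
    le_trans (degree_mul_le _ _) (add_le_add_left degree_X_le _)
  rw [ha] at hle
  cases hd : p.degree with
  | bot =>
    rw [hd] at hle
    simp only [WithBot.add_bot, le_bot_iff] at hle
    exact absurd hle (by simp [Nat.cast_withBot])
  | coe b =>
    rw [hd] at hle
    have hab : a ≤ 1 + b := by
      rw [show (1 : WithBot ℕ) + WithBot.some b = WithBot.some (1 + b) from rfl,
        Nat.cast_withBot] at hle
      exact WithBot.coe_le_coe.mp hle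
    have h1 := h b (by rw [hd]; simp [Nat.cast_withBot])
    have h2 : n * a ≤ n * (1 + b) := Nat.mul_le_mul_left n hab
    have h3 : n * (1 + b) = n + n * b := by ring
    omega

/-- vanishing of high coefficients -/
lemma wb_coeff_zero {n : ℕ} (hn : 0 < n) (p : Polynomial ℂ) {c e b : ℕ}
    (h : n • p.degree + (c : WithBot ℕ) ≤ (e : WithBot ℕ)) (he : e < n * b + c) :
    p.coeff b = 0 := by
  rw [wb_le_iff hn] at h
  cases hd : p.degree with
  | bot => rw [degree_eq_bot] at hd; rw [hd]; simp
  | coe a =>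
    have := h a (by rw [hd]; simp [Nat.cast_withBot])
    apply coeff_eq_zero_of_degree_lt
    rw [hd]
    have hab : a < b := by
      rcases Nat.lt_or_ge a b with h' | h'
      · exact h'
      · exfalso; have := Nat.mul_le_mul_left n h'; omega
    simpa [Nat.cast_withBot] using WithBot.coe_lt_coe.mpr hab




lemma wb_deg_max {n : ℕ} {d1 d2 : WithBot ℕ} {c e : ℕ}
    (h1 : n • d1 + (c : WithBot ℕ) ≤ (e : WithBot ℕ))
    (h2 : n • d2 + (c : WithBot ℕ) ≤ (e : WithBot ℕ)) :
    n • (d1 ⊔ d2) + (c : WithBot ℕ) ≤ (e : WithBot ℕ) := by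
  have hmono : Monotone (fun d : WithBot ℕ => n • d + (c : WithBot ℕ)) :=
    fun x y hxy => add_le_add_left (wb_smul_mono hxy) _
  have hms : n • (d1 ⊔ d2) + (c : WithBot ℕ)
      = (n • d1 + (c : WithBot ℕ)) ⊔ (n • d2 + (c : WithBot ℕ)) :=
    hmono.map_sup d1 d2
  rw [hms]
  exact sup_le h1 h2

lemma wb_relax {n : ℕ} {d : WithBot ℕ} {c e1 e2 : ℕ}
    (h : n • d + (c : WithBot ℕ) ≤ (e1 : WithBot ℕ)) (he : e1 ≤ e2) :
    n • d + (c : WithBot ℕ) ≤ (e2 : WithBot ℕ) :=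
  le_trans h (by simp only [Nat.cast_withBot]; exact WithBot.coe_le_coe.mpr he)

lemma phi_key
    (n N : ℕ) (hn : 0 < n) (hnN : n < N)
    (A : Matrix (Fin N) (Fin N) ℝ) (m : ℕ → ℕ)
    (hA : MatrixClassM n N A m)
    (T : Matrix (Fin n) (Fin n) ℝ)
    (hT_upper : ∀ i j : Fin n, j < i → T i j = 0)
    (hT_diag : ∀ j : Fin n, T j j ≠ 0)
    (φ : Fin n → Fin N → Polynomial ℂ)
    (hφ_init : ∀ (j : Fin n) (i : Fin n),
      φ j (Fin.castLE (le_of_lt hnN) i) = C ((T j i : ℂ)))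
    (hφ_rec : ∀ (j : Fin n) (k : Fin N),
      (∀ i, 1 ≤ i → i ≤ n → m i ≠ (k : ℕ) + 1) →
      ∑ l, C ((A k l : ℂ)) * φ j l = X * φ j k) :
    ∀ t : ℕ, 1 ≤ t → t ≤ N →
      (∀ (j : Fin n) (ht : t - 1 < N),
        n • (φ j ⟨t-1, ht⟩).degree + ((j : ℕ) : WithBot ℕ)
          ≤ ((om n m t : ℕ) : WithBot ℕ)) ∧
      (∀ (ht : t - 1 < N) (hs : st n m t - 1 < n),
        (φ ⟨st n m t - 1, hs⟩ ⟨t-1, ht⟩).coeff (len n m t) ≠ 0) := by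
  obtain ⟨hsymm, hband, hm0, hmN, hmono, hm1, hmle, hdpos, hdzero⟩ := hA
  intro t
  induction t using Nat.strong_induction_on with
  | _ t ih =>
    intro h1 h2
    by_cases hc : t ≤ n
    · -- base case
      have hi : t - 1 < n := by omega
      have hφval : ∀ (j : Fin n) (ht : t - 1 < N),
          φ j ⟨t-1, ht⟩ = C ((T j ⟨t-1, hi⟩ : ℝ) : ℂ) := by
        intro j ht
        exact hφ_init j ⟨t-1, hi⟩
      constructor
      · intro j ht
        rw [hφval j ht]
        rcases Nat.lt_or_ge (t-1) (j : ℕ) with hlt | hge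
        · have hT0 : T j ⟨t-1, hi⟩ = 0 := hT_upper j ⟨t-1, hi⟩ hlt
          rw [hT0]
          simp only [Complex.ofReal_zero, map_zero, degree_zero]
          rw [wb_smul_bot hn, WithBot.bot_add]
          exact bot_le
        · rw [wb_le_iff hn]
          intro a ha
          have hdeg : degree (C ((T j ⟨t-1, hi⟩ : ℝ) : ℂ)) ≤ 0 := degree_C_le
          rw [ha] at hdeg
          have ha0 : a = 0 := by
            have : ((a : ℕ) : WithBot ℕ) ≤ ((0 : ℕ) : WithBot ℕ) := by
              simpa using hdeg
            simp only [Nat.cast_withBot] at this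
            exact Nat.le_zero.mp (WithBot.coe_le_coe.mp this)
          subst ha0
          rw [om_le_self n m hc]
          omega
      · intro ht hs
        have hstt : st n m t = t := st_le n m hc
        have hlen : len n m t = 0 := len_le n m hc
        rw [hlen]
        have hidx : (⟨st n m t - 1, hs⟩ : Fin n) = ⟨t - 1, hi⟩ :=
          Fin.ext (by simp [hstt])
        rw [hidx, hφval ⟨t-1, hi⟩ ht, coeff_C_zero]
        exact Complex.ofReal_ne_zero.mpr (hT_diag _)
    · -- inductive step
      have hc' : n < t := by omega
      obtain ⟨hsjlt, hlo, hhi, hsum⟩ := pred_struct hn hmN hmono hm0 hc' h2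
      have hrN : pr n m t ≤ N := by
        have := m_mono_le hmono (sj n m t + 1) n (by omega) (le_refl n); omega
      have hr1 : 1 ≤ pr n m t := by omega
      have hkrlt : pr n m t - 1 < N := by omega
      have hkclt : t - 1 < N := by omega
      set r := pr n m t with hrdef
      set sjt := sj n m t with hsjdef
      set kr : Fin N := ⟨r-1, hkrlt⟩ with hkr
      set kc : Fin N := ⟨t-1, hkclt⟩ with hkc
      have hkrval : (kr : ℕ) = r - 1 := rfl
      have hkcval : (kc : ℕ) = t - 1 := rfl
      have hnotm : ∀ i, 1 ≤ i → i ≤ n → m i ≠ (kr : ℕ) + 1 := by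
        intro i hi1 hi2 hcon
        rw [hkrval] at hcon
        have hmir : m i = r := by omega
        rcases le_or_gt i sjt with hle | hgt
        · have := m_mono_le hmono i sjt hle (by omega); omega
        · have := m_mono_le hmono (sjt+1) i hgt hi2; omega
      have hApos : 0 < A kc kr := by
        apply hdpos sjt (by omega) kr kc
        · rw [hkrval, hkcval]; omega
        · rw [hkrval]; omega
        · rw [hkrval]; omega
      have ha0 : ((A kr kc : ℝ) : ℂ) ≠ 0 := by
        rw [ne_eq, Complex.ofReal_eq_zero]
        rw [hsymm.apply kc kr]
        exact ne_of_gt hApos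
      have hzero : ∀ l : Fin N, t ≤ (l : ℕ) → A kr l = 0 := by
        intro l hl
        rcases Nat.lt_or_ge ((kr : ℕ) + n) (l : ℕ) with hbig | hsmall
        · apply hband kr l
          rw [abs_sub_comm, abs_of_nonneg (by push_cast; omega)]
          push_cast
          omega
        · have hlkr : (l:ℕ) - (kr:ℕ) ≤ n := by omega
          have hlkr2 : n - sjt < (l:ℕ) - (kr:ℕ) := by omega
          have hcoord : (l : ℕ) = (kr : ℕ) + (n - (n - ((l:ℕ) - (kr:ℕ)))) := by omega
          have hj2 : n - ((l:ℕ) - (kr:ℕ)) < sjt := by omega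
          have hmle2 : m (n - ((l:ℕ) - (kr:ℕ)) + 1) ≤ m sjt :=
            m_mono_le hmono (n - ((l:ℕ) - (kr:ℕ)) + 1) sjt (by omega) (by omega)
              |>.trans' (by omega)
          have hz := hdzero (n - ((l:ℕ) - (kr:ℕ))) (by omega) kr l hcoord
            (by omega)
            (by have := l.isLt; omega)
          rw [← hsymm.apply kr l]
          exact hz
      have hrec : ∀ j : Fin n, C ((A kr kc : ℝ) : ℂ) * φ j kc
          = X * φ j kr - ∑ l ∈ Finset.univ.erase kc, C ((A kr l : ℝ) : ℂ) * φ j l := by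
        intro j
        have h0 := hφ_rec j kr hnotm
        rw [← Finset.add_sum_erase _ _ (Finset.mem_univ kc)] at h0
        exact eq_sub_of_add_eq h0
      -- the IH at the predecessor row r
      have hIHr := ih r (by omega) hr1 hrN
      have homt : om n m t = om n m r + n := om_gt m hc
      -- bound for the terms of the erased sum
      have hterm : ∀ (j : Fin n) (l : Fin N), l ∈ Finset.univ.erase kc →
          n • (C ((A kr l : ℝ) : ℂ) * φ j l).degree + ((j : ℕ) : WithBot ℕ)
            ≤ ((om n m t - 1 : ℕ) : WithBot ℕ) := by
        intro j l hl
        by_cases hge : t ≤ (l : ℕ)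
        · rw [hzero l hge]
          simp only [Complex.ofReal_zero, map_zero, zero_mul, degree_zero]
          rw [wb_smul_bot hn, WithBot.bot_add]
          exact bot_le
        · have hne : (l : ℕ) ≠ t - 1 := by
            intro hcon
            exact (Finset.mem_erase.mp hl).1 (Fin.ext (by rw [hcon, hkcval]))
          have hll : (l : ℕ) + 1 ≤ t - 1 := by omega
          have ihl := (ih ((l:ℕ)+1) (by omega) (by omega) (by omega)).1 j
            (by omega : (l:ℕ)+1-1 < N)
          have hidx : (⟨(l:ℕ)+1-1, by omega⟩ : Fin N) = l := Fin.ext (by simp)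
          rw [hidx] at ihl
          have hom : om n m ((l:ℕ)+1) ≤ om n m t - 1 := by
            have := om_strict_mono (m := m) hn t ((l:ℕ)+1) (by omega) (by omega); omega
          have hCle : (C ((A kr l : ℝ) : ℂ) * φ j l).degree ≤ (φ j l).degree := by
            refine le_trans (degree_mul_le _ _) ?_
            calc degree (C ((A kr l : ℝ) : ℂ)) + (φ j l).degree
                ≤ 0 + (φ j l).degree := add_le_add_left degree_C_le _
              _ = (φ j l).degree := zero_add _
          exact wb_relax (wb_deg_le hn hCle ihl) hom
      constructor
      · -- part (a): degree bound at t
        intro j ht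
        have hkcid : (⟨t-1, ht⟩ : Fin N) = kc := rfl
        rw [hkcid]
        have hdegeq : (φ j kc).degree = (C ((A kr kc : ℝ) : ℂ) * φ j kc).degree :=
          (degree_C_mul ha0).symm
        rw [hdegeq, hrec j]
        have hXb : n • (X * φ j kr).degree + ((j:ℕ) : WithBot ℕ)
            ≤ ((om n m r + n : ℕ) : WithBot ℕ) := by
          have hIH := hIHr.1 j (by omega)
          have hidx : (⟨r-1, by omega⟩ : Fin N) = kr := rfl
          rw [hidx] at hIH
          exact wb_deg_X_mul hn _ hIH
        have hSb := wb_deg_sum hn (Finset.univ.erase kc)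
          (fun l => C ((A kr l : ℝ) : ℂ) * φ j l) (j : ℕ) (om n m t - 1) (hterm j)
        have hsub : (X * φ j kr - ∑ l ∈ Finset.univ.erase kc,
            C ((A kr l : ℝ) : ℂ) * φ j l).degree
            ≤ max (X * φ j kr).degree (∑ l ∈ Finset.univ.erase kc,
              C ((A kr l : ℝ) : ℂ) * φ j l).degree := degree_sub_le _ _
        refine le_trans (add_le_add_left (wb_smul_mono hsub) _) (wb_deg_max ?_ ?_)
        · rw [homt]; exact hXb
        · exact wb_relax hSb (by omega)
      · -- part (b): nonvanishing of the top coefficient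
        intro ht hs
        have hkcid : (⟨t-1, ht⟩ : Fin N) = kc := rfl
        rw [hkcid]
        have hstt : st n m t = st n m r := st_gt n m hc
        have hlent : len n m t = len n m r + 1 := len_gt n m hc
        have hsr : st n m r - 1 < n := by
          have := st_range (m := m) hn r hr1; omega
        have hIHc := hIHr.2 (by omega) hsr
        have hidxr : (⟨r-1, by omega⟩ : Fin N) = kr := rfl
        rw [hidxr] at hIHc
        have hjidx : (⟨st n m t - 1, hs⟩ : Fin n) = ⟨st n m r - 1, hsr⟩ :=
          Fin.ext (by simp [hstt])
        rw [hjidx]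
        set js : Fin n := ⟨st n m r - 1, hsr⟩ with hjs
        have heq := congrArg (fun p => p.coeff (len n m t)) (hrec js)
        simp only [coeff_C_mul, coeff_sub] at heq
        have hXcoeff : (X * φ js kr).coeff (len n m t) = (φ js kr).coeff (len n m r) := by
          rw [hlent, coeff_X_mul]
        have hScoeff : (∑ l ∈ Finset.univ.erase kc,
            C ((A kr l : ℝ) : ℂ) * φ js l).coeff (len n m t) = 0 := by
          rw [finset_sum_coeff]
          apply Finset.sum_eq_zero
          intro l hl
          apply wb_coeff_zero hn _ (hterm js l hl)
          have hjsval : (js : ℕ) = st n m r - 1 := rfl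
          rw [hjsval]
          have homval : om n m t = st n m t - 1 + n * len n m t := rfl
          have hst1 : 1 ≤ st n m t := (st_range (m := m) hn t (by omega)).1
          rw [hstt] at homval
          omega
        rw [hXcoeff, hScoeff] at heq
        intro hcon
        rw [hcon, mul_zero] at heq
        rw [sub_zero] at heq
        exact hIHc heq.symm




lemma Q_key
    (n N : ℕ) (hn : 0 < n) (hnN : n < N)
    (A : Matrix (Fin N) (Fin N) ℝ) (m : ℕ → ℕ)
    (hA : MatrixClassM n N A m)
    (T : Matrix (Fin n) (Fin n) ℝ)
    (hT_upper : ∀ i j : Fin n, j < i → T i j = 0)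
    (hT_diag : ∀ j : Fin n, T j j ≠ 0)
    (φ : Fin n → Fin N → Polynomial ℂ)
    (hφ_init : ∀ (j : Fin n) (i : Fin n),
      φ j (Fin.castLE (le_of_lt hnN) i) = C ((T j i : ℂ)))
    (hφ_rec : ∀ (j : Fin n) (k : Fin N),
      (∀ i, 1 ≤ i → i ≤ n → m i ≠ (k : ℕ) + 1) →
      ∑ l, C ((A k l : ℂ)) * φ j l = X * φ j k)
    (Q : Fin n → Fin n → Polynomial ℂ)
    (hQ : ∀ (j i : Fin n) (k : Fin N), (k : ℕ) + 1 = m ((i : ℕ) + 1) →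
      Q j i = X * φ j k - ∑ l, C ((A k l : ℂ)) * φ j l)
    (i : Fin n) :
    (∀ j : Fin n, n • (Q j i).degree + ((j : ℕ) : WithBot ℕ)
        ≤ ((om n m (m ((i : ℕ) + 1)) + n : ℕ) : WithBot ℕ)) ∧
    (∀ hs : st n m (m ((i : ℕ) + 1)) - 1 < n,
      (Q ⟨st n m (m ((i : ℕ) + 1)) - 1, hs⟩ i).coeff (len n m (m ((i : ℕ) + 1)) + 1) ≠ 0) := by
  have hphi := phi_key n N hn hnN A m hA T hT_upper hT_diag φ hφ_init hφ_rec
  obtain ⟨hsymm, hband, hm0, hmN, hmono, hm1, hmle, hdpos, hdzero⟩ := hA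
  set i1 : ℕ := (i : ℕ) + 1 with hi1
  have hi1a : 1 ≤ i1 := by omega
  have hi1b : i1 ≤ n := by have := i.isLt; omega
  have ht2 : 2 ≤ m i1 := by have := m_ge hmono hm1 i1 hi1a hi1b; omega
  have htN : m i1 ≤ N := by have := m_mono_le hmono i1 n hi1b (le_refl n); omega
  set t : ℕ := m i1 with htdef
  have hktlt : t - 1 < N := by omega
  set kt : Fin N := ⟨t-1, hktlt⟩ with hkt
  have hktval : (kt : ℕ) = t - 1 := rfl
  have hQeq : ∀ j : Fin n, Q j i
      = X * φ j kt - ∑ l, C ((A kt l : ℝ) : ℂ) * φ j l := by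
    intro j
    exact hQ j i kt (by show t - 1 + 1 = m i1; omega)
  -- zero entries
  have hzero : ∀ l : Fin N, t + (n - i1) < (l : ℕ) + 1 → A kt l = 0 := by
    intro l hl
    rcases Nat.lt_or_ge ((kt : ℕ) + n) (l : ℕ) with hbig | hsmall
    · apply hband kt l
      rw [abs_sub_comm, abs_of_nonneg (by push_cast; omega)]
      push_cast
      omega
    · have hlgt : t - 1 < (l : ℕ) := by omega
      have hlkr : (l:ℕ) - (kt:ℕ) ≤ n := by omega
      have hcoord : (l : ℕ) = (kt : ℕ) + (n - (n - ((l:ℕ) - (kt:ℕ)))) := by omega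
      have hj2 : n - ((l:ℕ) - (kt:ℕ)) < i1 := by omega
      have hmle2 : m (n - ((l:ℕ) - (kt:ℕ)) + 1) ≤ m i1 :=
        m_mono_le hmono (n - ((l:ℕ) - (kt:ℕ)) + 1) i1 (by omega) hi1b |>.trans' (by omega)
      have hz := hdzero (n - ((l:ℕ) - (kt:ℕ))) (by omega) kt l hcoord
        (by omega)
        (by have := l.isLt; omega)
      rw [← hsymm.apply kt l]
      exact hz
  have hmi : om n m (t + (n - i1)) + 1 ≤ om n m t + n :=
    om_mi hn hmN hmono hm0 hnN hm1 hmle hi1a hi1b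
  -- bound for each summand
  have hterm : ∀ (j : Fin n) (l : Fin N), l ∈ (Finset.univ : Finset (Fin N)) →
      n • (C ((A kt l : ℝ) : ℂ) * φ j l).degree + ((j : ℕ) : WithBot ℕ)
        ≤ ((om n m t + n - 1 : ℕ) : WithBot ℕ) := by
    intro j l _
    by_cases hge : t + (n - i1) < (l : ℕ) + 1
    · rw [hzero l hge]
      simp only [Complex.ofReal_zero, map_zero, zero_mul, degree_zero]
      rw [wb_smul_bot hn, WithBot.bot_add]
      exact bot_le
    · have hll : (l : ℕ) + 1 ≤ t + (n - i1) := by omega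
      have ihl := (hphi ((l:ℕ)+1) (by omega) (by have := l.isLt; omega)).1 j
        (by omega : (l:ℕ)+1-1 < N)
      have hidx : (⟨(l:ℕ)+1-1, by omega⟩ : Fin N) = l := Fin.ext (by simp)
      rw [hidx] at ihl
      have hom : om n m ((l:ℕ)+1) ≤ om n m t + n - 1 := by
        have h1 : om n m ((l:ℕ)+1) ≤ om n m (t + (n - i1)) :=
          om_mono hn (by omega) hll
        omega
      have hCle : (C ((A kt l : ℝ) : ℂ) * φ j l).degree ≤ (φ j l).degree := by
        refine le_trans (degree_mul_le _ _) ?_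
        calc degree (C ((A kt l : ℝ) : ℂ)) + (φ j l).degree
            ≤ 0 + (φ j l).degree := add_le_add_left degree_C_le _
          _ = (φ j l).degree := zero_add _
      exact wb_relax (wb_deg_le hn hCle ihl) hom
  have hphit := hphi t (by omega) htN
  have hidxt : (⟨t-1, by omega⟩ : Fin N) = kt := rfl
  constructor
  · intro j
    rw [hQeq j]
    have hXb : n • (X * φ j kt).degree + ((j:ℕ) : WithBot ℕ)
        ≤ ((om n m t + n : ℕ) : WithBot ℕ) := by
      have hIH := hphit.1 j (by omega)
      rw [hidxt] at hIH
      exact wb_deg_X_mul hn _ hIH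
    have hSb := wb_deg_sum hn Finset.univ
      (fun l => C ((A kt l : ℝ) : ℂ) * φ j l) (j : ℕ) (om n m t + n - 1) (hterm j)
    have hsub : (X * φ j kt - ∑ l, C ((A kt l : ℝ) : ℂ) * φ j l).degree
        ≤ (X * φ j kt).degree ⊔ (∑ l, C ((A kt l : ℝ) : ℂ) * φ j l).degree :=
      degree_sub_le _ _
    refine le_trans (add_le_add_left (wb_smul_mono hsub) _) (wb_deg_max ?_ ?_)
    · exact hXb
    · exact wb_relax hSb (by omega)
  · intro hs
    have hIHc := hphit.2 (by omega) hs
    rw [hidxt] at hIHc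
    set js : Fin n := ⟨st n m t - 1, hs⟩ with hjs
    have heq := congrArg (fun p => p.coeff (len n m t + 1)) (hQeq js)
    simp only [coeff_sub] at heq
    have hXcoeff : (X * φ js kt).coeff (len n m t + 1) = (φ js kt).coeff (len n m t) :=
      coeff_X_mul _ _
    have hScoeff : (∑ l, C ((A kt l : ℝ) : ℂ) * φ js l).coeff (len n m t + 1) = 0 := by
      rw [finset_sum_coeff]
      apply Finset.sum_eq_zero
      intro l hl
      apply wb_coeff_zero hn _ (hterm js l hl)
      have hjsval : (js : ℕ) = st n m t - 1 := rfl
      rw [hjsval]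
      have homval : om n m t = st n m t - 1 + n * len n m t := rfl
      have hst1 : 1 ≤ st n m t := (st_range (m := m) hn t (by omega)).1
      have hexp : n * (len n m t + 1) = n * len n m t + n := by ring
      omega
    rw [hXcoeff, hScoeff, sub_zero] at heq
    rw [heq]
    exact hIHc


end Stmt15Aux


/-- The heights h(q_1),…,h(q_n) are distinct mod n and sum to Nn + n(n−1)/2. -/

theorem stmt15
    (n N : ℕ) (hn : 0 < n) (hnN : n < N)
    (A : Matrix (Fin N) (Fin N) ℝ) (m : ℕ → ℕ)
    (hA : MatrixClassM n N A m)
    (T : Matrix (Fin n) (Fin n) ℝ)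
    (hT_upper : ∀ i j : Fin n, j < i → T i j = 0)
    (hT_diag : ∀ j : Fin n, T j j ≠ 0)
    (φ : Fin n → Fin N → Polynomial ℂ)
    (hφ_init : ∀ (j : Fin n) (i : Fin n),
      φ j (Fin.castLE (le_of_lt hnN) i) = C ((T j i : ℂ)))
    (hφ_rec : ∀ (j : Fin n) (k : Fin N),
      (∀ i, 1 ≤ i → i ≤ n → m i ≠ (k : ℕ) + 1) →
      ∑ l, C ((A k l : ℂ)) * φ j l = X * φ j k)
    (Q : Fin n → Fin n → Polynomial ℂ)
    (hQ : ∀ (j i : Fin n) (k : Fin N), (k : ℕ) + 1 = m ((i : ℕ) + 1) →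
      Q j i = X * φ j k - ∑ l, C ((A k l : ℂ)) * φ j l)
    :
    (∀ i j : Fin n, i ≠ j → ∀ a b : ℕ,
      vheight n (fun jj => Q jj i) = (a : WithBot ℕ) →
      vheight n (fun jj => Q jj j) = (b : WithBot ℕ) →
        a % n ≠ b % n) ∧
    (∑ j : Fin n, vheight n (fun jj => Q jj j)
      = ((N * n + n * (n - 1) / 2 : ℕ) : WithBot ℕ)) := by
  classical
  have hQk := fun i => Stmt15Aux.Q_key n N hn hnN A m hA T hT_upper hT_diag φ
    hφ_init hφ_rec Q hQ i
  have hm0 := hA.m_zero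
  have hmN := hA.m_last
  have hmono := hA.m_mono
  have hm1 := hA.m_one
  have hmle := hA.m_le
  have hstfacts : ∀ i : Fin n,
      1 ≤ Stmt15Aux.st n m (m ((i:ℕ)+1)) ∧ Stmt15Aux.st n m (m ((i:ℕ)+1)) ≤ n
        ∧ 1 ≤ m ((i:ℕ)+1) := by
    intro i
    have hi1b : (i:ℕ)+1 ≤ n := by have := i.isLt; omega
    have hm1' : 1 ≤ m ((i:ℕ)+1) := by
      have := Stmt15Aux.m_ge hmono hm1 ((i:ℕ)+1) (by omega) hi1b; omega
    have := Stmt15Aux.st_range (m := m) hn (m ((i:ℕ)+1)) hm1'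
    exact ⟨this.1, this.2, hm1'⟩
  -- the heights are exactly om (m (i+1)) + n
  have hH : ∀ i : Fin n, vheight n (fun jj => Q jj i)
      = ((Stmt15Aux.om n m (m ((i:ℕ)+1)) + n : ℕ) : WithBot ℕ) := by
    intro i
    obtain ⟨hub, hlb⟩ := hQk i
    obtain ⟨hst1, hst2, hm1'⟩ := hstfacts i
    have hs : Stmt15Aux.st n m (m ((i:ℕ)+1)) - 1 < n := by omega
    apply le_antisymm
    · apply Finset.sup_le
      intro j _
      exact hub j
    · have hcoeff := hlb hs
      have hdeg : ((Stmt15Aux.len n m (m ((i:ℕ)+1)) + 1 : ℕ) : WithBot ℕ)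
          ≤ (Q ⟨Stmt15Aux.st n m (m ((i:ℕ)+1)) - 1, hs⟩ i).degree := by
        have := le_degree_of_ne_zero hcoeff
        simpa [Nat.cast_withBot] using this
      refine le_trans ?_ (Finset.le_sup (Finset.mem_univ
        (⟨Stmt15Aux.st n m (m ((i:ℕ)+1)) - 1, hs⟩ : Fin n)))
      have h2 : ((Stmt15Aux.om n m (m ((i:ℕ)+1)) + n : ℕ) : WithBot ℕ)
          = n • ((Stmt15Aux.len n m (m ((i:ℕ)+1)) + 1 : ℕ) : WithBot ℕ)
            + ((Stmt15Aux.st n m (m ((i:ℕ)+1)) - 1 : ℕ) : WithBot ℕ) := by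
        rw [Stmt15Aux.wb_smul_coe]
        rw [Nat.cast_withBot, Nat.cast_withBot, Nat.cast_withBot, ← WithBot.coe_add]
        congr 1
        have homval : Stmt15Aux.om n m (m ((i:ℕ)+1))
            = Stmt15Aux.st n m (m ((i:ℕ)+1)) - 1
              + n * Stmt15Aux.len n m (m ((i:ℕ)+1)) := rfl
        have hmul : n * (Stmt15Aux.len n m (m ((i:ℕ)+1)) + 1)
            = n * Stmt15Aux.len n m (m ((i:ℕ)+1)) + n := by ring
        omega
      rw [h2]
      exact add_le_add (Stmt15Aux.wb_smul_mono hdeg) (le_refl _)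
  constructor
  · intro i j hij a b hva hvb
    have ha : a = Stmt15Aux.om n m (m ((i:ℕ)+1)) + n := by
      have h := hva.symm.trans (hH i)
      rw [Nat.cast_withBot, Nat.cast_withBot] at h
      exact WithBot.coe_inj.mp h
    have hb : b = Stmt15Aux.om n m (m ((j:ℕ)+1)) + n := by
      have h := hvb.symm.trans (hH j)
      rw [Nat.cast_withBot, Nat.cast_withBot] at h
      exact WithBot.coe_inj.mp h
    obtain ⟨hsti1, hsti2, _⟩ := hstfacts i
    obtain ⟨hstj1, hstj2, _⟩ := hstfacts j
    have hmod : ∀ k : Fin n, (Stmt15Aux.om n m (m ((k:ℕ)+1)) + n) % n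
        = Stmt15Aux.st n m (m ((k:ℕ)+1)) - 1 := by
      intro k
      obtain ⟨hk1, hk2, _⟩ := hstfacts k
      have homval : Stmt15Aux.om n m (m ((k:ℕ)+1))
          = Stmt15Aux.st n m (m ((k:ℕ)+1)) - 1
            + n * Stmt15Aux.len n m (m ((k:ℕ)+1)) := rfl
      have hrw : Stmt15Aux.om n m (m ((k:ℕ)+1)) + n
          = (Stmt15Aux.st n m (m ((k:ℕ)+1)) - 1)
            + n * (Stmt15Aux.len n m (m ((k:ℕ)+1)) + 1) := by
        have : n * (Stmt15Aux.len n m (m ((k:ℕ)+1)) + 1)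
            = n * Stmt15Aux.len n m (m ((k:ℕ)+1)) + n := by ring
        omega
      rw [hrw, Nat.add_mul_mod_self_left]
      exact Nat.mod_eq_of_lt (by omega)
    rw [ha, hb, hmod i, hmod j]
    intro hcon
    have hsteq : Stmt15Aux.st n m (m ((i:ℕ)+1)) = Stmt15Aux.st n m (m ((j:ℕ)+1)) := by
      omega
    have := Stmt15Aux.st_m_inj hn hmN hmono hm0 hnN hm1
      (by omega : 1 ≤ (i:ℕ)+1) (by have := i.isLt; omega)
      (by omega : 1 ≤ (j:ℕ)+1) (by have := j.isLt; omega) hsteq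
    exact hij (Fin.ext (by omega))
  · rw [Finset.sum_congr rfl (fun i _ => hH i)]
    rw [← Nat.cast_sum]
    congr 1
    rw [Fin.sum_univ_eq_sum_range (fun i => Stmt15Aux.om n m (m (i+1)) + n)]
    exact Stmt15Aux.om_sum hn hmN hmono hm0 hnN hm1 hmle
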